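/- Let G be a prime P5-free graph with an efficient dominating set D = {d_1, ..., d_k} with k ≥ 2, and let R_i = N(d_i) \ D. Then for every i, the set R_i is a clique in G. -/

import Mathlib

open SimpleGraph

/-- `D` is an efficient dominating set: every vertex is dominated by exactly one vertex of `D`
(a vertex dominates itself and its neighbors). -/
def SimpleGraph.IsEDS {V : Type*} (G : SimpleGraph V) (D : Set V) : Prop :=
  ∀ v : V, ∃! d, d ∈ D ∧ (d = v ∨ G.Adj d v)

/-- The closed neighborhood of a vertex. -/
def SimpleGraph.closedNbhd {V : Type*} (G : SimpleGraph V) (v : V) : Set V :=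
  insert v (G.neighborSet v)

/-- A homogeneous set: at least two vertices, not all of them, and every outside vertex is
adjacent to all or to none of them. -/
def SimpleGraph.IsHomogeneousSet {V : Type*} (G : SimpleGraph V) (H : Set V) : Prop :=
  2 ≤ H.ncard ∧ H ≠ Set.univ ∧
    ∀ v ∉ H, (∀ h ∈ H, G.Adj v h) ∨ (∀ h ∈ H, ¬ G.Adj v h)

/-- A prime graph: at least two vertices and no homogeneous set. -/
def SimpleGraph.IsPrime {V : Type*} [Fintype V] (G : SimpleGraph V) : Prop :=
  2 ≤ Fintype.card V ∧ ∀ H : Set V, ¬ G.IsHomogeneousSet H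

/-- `G` is `P₅`-free: no induced subgraph isomorphic to the path on five vertices. -/
def SimpleGraph.P5Free {V : Type*} (G : SimpleGraph V) : Prop :=
  ¬ Nonempty (SimpleGraph.pathGraph 5 ↪g G)

/-- The graph `2P₂`: the disjoint union of two edges. -/
def twoP2 : SimpleGraph (Fin 4) :=
  SimpleGraph.fromRel (fun a b => (a = 0 ∧ b = 1) ∨ (a = 2 ∧ b = 3))

/-- `G` is `2P₂`-free: no induced subgraph isomorphic to `2P₂`. -/
def SimpleGraph.TwoP2Free {V : Type*} (G : SimpleGraph V) : Prop :=
  ¬ Nonempty (twoP2 ↪g G)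

/-- A thin spider: a split graph with a clique side `C` and independent side `I`,
with a perfect matching between `C` and `I`. -/
def SimpleGraph.IsThinSpider {V : Type*} (G : SimpleGraph V) : Prop :=
  ∃ C I : Set V, Disjoint C I ∧ C ∪ I = Set.univ ∧ G.IsClique C ∧
    (∀ a ∈ I, ∀ b ∈ I, a ≠ b → ¬ G.Adj a b) ∧
    (∀ c ∈ C, ∃! i, i ∈ I ∧ G.Adj c i) ∧
    (∀ i ∈ I, ∃! c, c ∈ C ∧ G.Adj i c)

lemma p5_helper {V : Type*} (G : SimpleGraph V) (v0 v1 v2 v3 v4 : V)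
    (h02 : v0 ≠ v2) (h03 : v0 ≠ v3) (h04 : v0 ≠ v4) (h13 : v1 ≠ v3)
    (h14 : v1 ≠ v4) (h24 : v2 ≠ v4)
    (e01 : G.Adj v0 v1) (e12 : G.Adj v1 v2) (e23 : G.Adj v2 v3) (e34 : G.Adj v3 v4)
    (n02 : ¬ G.Adj v0 v2) (n03 : ¬ G.Adj v0 v3) (n04 : ¬ G.Adj v0 v4)
    (n13 : ¬ G.Adj v1 v3) (n14 : ¬ G.Adj v1 v4) (n24 : ¬ G.Adj v2 v4) :
    Nonempty (SimpleGraph.pathGraph 5 ↪g G) := by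
  have h01 := e01.ne
  have h12 := e12.ne
  have h23 := e23.ne
  have h34 := e34.ne
  have e10 := e01.symm
  have e21 := e12.symm
  have e32 := e23.symm
  have e43 := e34.symm
  have n20 : ¬ G.Adj v2 v0 := fun h => n02 h.symm
  have n30 : ¬ G.Adj v3 v0 := fun h => n03 h.symm
  have n40 : ¬ G.Adj v4 v0 := fun h => n04 h.symm
  have n31 : ¬ G.Adj v3 v1 := fun h => n13 h.symm
  have n41 : ¬ G.Adj v4 v1 := fun h => n14 h.symm
  have n42 : ¬ G.Adj v4 v2 := fun h => n24 h.symm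
  refine ⟨⟨⟨![v0,v1,v2,v3,v4], ?_⟩, ?_⟩⟩
  · intro i j hij
    fin_cases i <;> fin_cases j <;> simp_all
  · intro i j
    show G.Adj (![v0,v1,v2,v3,v4] i) (![v0,v1,v2,v3,v4] j) ↔ _
    fin_cases i <;> fin_cases j <;>
      simp_all [pathGraph_adj, SimpleGraph.irrefl] <;> decide


theorem stmt_3 {V : Type*} [Fintype V] (G : SimpleGraph V) (hprime : G.IsPrime)
    (hP5 : G.P5Free) (D : Set V) (hD : G.IsEDS D) (hcard : 2 ≤ D.ncard)
    (d : V) (hd : d ∈ D) :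
    G.IsClique (G.neighborSet d \ D) := by
  set S : Set V := G.neighborSet d \ D with hS
  rintro x hx y hy hne
  by_contra hnadj
  -- unique domination facts
  have domuniq : ∀ z e e' : V, e ∈ D → (e = z ∨ G.Adj e z) → e' ∈ D → (e' = z ∨ G.Adj e' z) →
      e = e' := by
    intro z e e' he h1 he' h2
    obtain ⟨u, _, hu⟩ := hD z
    rw [hu e ⟨he, h1⟩, hu e' ⟨he', h2⟩]
  have nAdjS : ∀ z ∈ S, ∀ e ∈ D, e ≠ d → ¬ G.Adj e z := by
    intro z hz e he hned ha
    exact hned (domuniq z e d he (Or.inr ha) hd (Or.inr hz.1))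
  have nAdjDD : ∀ e ∈ D, e ≠ d → ¬ G.Adj e d := by
    intro e he hned ha
    exact hned (domuniq d e d he (Or.inr ha) hd (Or.inl rfl))
  -- the "non-edge within S" graph
  set K : SimpleGraph V :=
    { Adj := fun a b => a ≠ b ∧ ¬ G.Adj a b ∧ a ∈ S ∧ b ∈ S
      symm := by
        constructor
        rintro a b ⟨h1, h2, h3, h4⟩
        exact ⟨h1.symm, fun h => h2 h.symm, h4, h3⟩
      loopless := by constructor; rintro a ⟨h1, -⟩; exact h1 rfl } with hK
  set H : Set V := {z : V | K.Reachable x z} with hHdef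
  have subS : ∀ a b : V, K.Walk a b → a ∈ S → b ∈ S := by
    intro a b w
    induction w with
    | nil => exact id
    | cons h _ ih => exact fun _ => ih h.2.2.2
  have hHS : ∀ z ∈ H, z ∈ S := by
    rintro z hz
    obtain ⟨w⟩ := hz
    exact subS x z w hx
  have hxH : x ∈ H := Reachable.refl x
  have hyH : y ∈ H := ⟨Walk.cons ⟨hne, hnadj, hx, hy⟩ Walk.nil⟩
  apply hprime.2 H
  refine ⟨?_, ?_, ?_⟩
  · rw [show (2:ℕ) = 1 + 1 by rfl]
    rw [Nat.add_one_le_iff, Set.one_lt_ncard (Set.toFinite H)]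
    exact ⟨x, hxH, y, hyH, hne⟩
  · intro hU
    have : d ∈ H := hU ▸ Set.mem_univ d
    exact (hHS d this).2 hd
  · intro v hvH
    by_cases hvS : v ∈ S
    · -- v in S but not in H: adjacent to all of H
      left
      intro h hh
      by_contra hna
      exact hvH (hh.trans ⟨Walk.cons ⟨fun he => hvH (Set.mem_of_eq_of_mem he.symm hh), fun h' => hna h'.symm,
        hHS h hh, hvS⟩ Walk.nil⟩)
    · by_cases hvD : v ∈ D
      · by_cases hvd : v = d
        · left
          intro h hh
          exact hvd ▸ (hHS h hh).1
        · right
          intro h hh ha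
          exact nAdjS h (hHS h hh) v hvD hvd ha
      · -- v dominated by some d' ≠ d
        obtain ⟨u, ⟨huD, hdom⟩, -⟩ := hD v
        have hadj' : G.Adj u v := by
          rcases hdom with h | h
          · exact absurd (h ▸ huD) hvD
          · exact h
        have hund : u ≠ d := by
          rintro rfl
          exact hvS ⟨hadj', hvD⟩
        -- adjacency to v is constant along K-edges
        have econst : ∀ a b : V, K.Adj a b → G.Adj v a → G.Adj v b := by
          intro a b hab hva
          by_contra hvb
          apply hP5
          refine p5_helper G b d a v u ?_ ?_ ?_ ?_ ?_ ?_ ?_ ?_ ?_ ?_ ?_ ?_ ?_ ?_ ?_ ?_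
          · exact fun h => hab.1 h.symm
          · rintro rfl; exact hvS hab.2.2.2
          · rintro rfl; exact hab.2.2.2.2 huD
          · rintro rfl; exact hvD hd
          · rintro rfl; exact hund rfl
          · rintro rfl; exact hab.2.2.1.2 huD
          · exact hab.2.2.2.1.symm
          · exact hab.2.2.1.1
          · exact hva.symm
          · exact hadj'.symm
          · exact fun h => hab.2.1 h.symm
          · exact fun h => hvb h.symm
          · exact fun h => nAdjS b hab.2.2.2 u huD hund h.symm
          · intro h; exact hvS ⟨h, hvD⟩
          · exact fun h => nAdjDD u huD hund h.symm
          · exact fun h => nAdjS a hab.2.2.1 u huD hund h.symm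
        have wconst : ∀ a b : V, K.Walk a b → (G.Adj v a ↔ G.Adj v b) := by
          intro a b w
          induction w with
          | nil => exact Iff.rfl
          | cons h _ ih => exact (Iff.intro (econst _ _ h) (econst _ _ h.symm)).trans ih
        by_cases hvx : G.Adj v x
        · left
          intro h hh
          obtain ⟨w⟩ := hh
          exact (wconst x h w).mp hvx
        · right
          intro h hh ha
          obtain ⟨w⟩ := hh
          exact hvx ((wconst x h w).mpr ha)
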